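/- For every integer 1 ≤ k ≤ d and every w ∈ ℝ^d, ‖w‖_k^el ≤ ‖w‖_k^sp ≤ √2 · ‖w‖_k^el, and moreover the second inequality is strict whenever w ≠ 0: ‖w‖_k^sp < √2 · ‖w‖_k^el for w ≠ 0. -/

import Mathlib

/-- The nonincreasing rearrangement of the absolute values of `u`,
0-indexed: `absDown u i` is the `(i+1)`-th largest of `|u 0|, …, |u (d-1)|`. -/
noncomputable def absDown {d : ℕ} (u : Fin d → ℝ) (i : Fin d) : ℝ :=
  |u (Tuple.sort (fun j => |u j|) i.rev)|

/-- 1-indexed access to the nonincreasing rearrangement: `zD u i = |u|↓_i` for `1 ≤ i ≤ d`. -/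
noncomputable def zD {d : ℕ} (u : Fin d → ℝ) (i : ℕ) : ℝ :=
  if h : 1 ≤ i ∧ i ≤ d then absDown u ⟨i - 1, by omega⟩ else 0

/-- The unit ball of the k-support norm: the convex hull of
`S_k = {w : ‖w‖₀ ≤ k, ‖w‖₂ ≤ 1}`. -/
noncomputable def kSupBall (d k : ℕ) : Set (EuclideanSpace ℝ (Fin d)) :=
  convexHull ℝ {w | (Finset.univ.filter fun i => w i ≠ 0).card ≤ k ∧ ‖w‖ ≤ 1}

/-- The k-support norm, defined as the gauge of `kSupBall d k`. -/
noncomputable def kSupNorm (d k : ℕ) (w : EuclideanSpace ℝ (Fin d)) : ℝ :=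
  gauge (kSupBall d k) w

/-- The elastic-net norm `max{‖w‖₂, ‖w‖₁ / √k}`. -/
noncomputable def elNet (d k : ℕ) (w : EuclideanSpace ℝ (Fin d)) : ℝ :=
  max ‖w‖ ((∑ i, |w i|) / Real.sqrt k)

open Finset

-- greedy head-set lemma
lemma exists_head (d : ℕ) (z : Fin d → ℝ) (hz : ∀ i, 0 ≤ z i) :
    ∀ (m : ℕ), 1 ≤ m → ∀ (A : Finset (Fin d)),
    ∃ H ⊆ A, H.card < m ∧
      (∀ i ∈ H, (∑ j ∈ A \ H, z j) < (m - H.card : ℕ) * z i) ∧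
      (∀ i ∈ A \ H, (m - H.card : ℕ) * z i ≤ ∑ j ∈ A \ H, z j) := by
  intro m
  induction m with
  | zero => omega
  | succ m ih =>
    intro _ A
    by_cases hbase : ∀ i ∈ A, ((m+1 : ℕ) : ℝ) * z i ≤ ∑ j ∈ A, z j
    · exact ⟨∅, empty_subset _, by simp [Nat.succ_pos], by simp, by simpa using hbase⟩
    · push_neg at hbase
      obtain ⟨i₁, hi₁A, hi₁⟩ := hbase
      -- pick the max of z over A
      obtain ⟨i₀, hi₀A, hi₀max⟩ := A.exists_max_image z ⟨i₁, hi₁A⟩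
      have hm1 : 1 ≤ m := by
        by_contra hm
        have hm0 : m = 0 := by omega
        subst hm0
        -- m+1 = 1 : 1 * z i₁ > sum over A, contradiction with z nonneg
        have : z i₁ ≤ ∑ j ∈ A, z j := Finset.single_le_sum (fun j _ => hz j) hi₁A
        simp at hi₁; linarith
      have hviol : (∑ j ∈ A, z j) < ((m+1 : ℕ) : ℝ) * z i₀ := by
        calc (∑ j ∈ A, z j) < ((m+1:ℕ):ℝ) * z i₁ := hi₁
        _ ≤ ((m+1:ℕ):ℝ) * z i₀ := by
            exact mul_le_mul_of_nonneg_left (hi₀max i₁ hi₁A) (by positivity)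
      obtain ⟨H', hH'sub, hH'card, hin, hout⟩ := ih hm1 (A.erase i₀)
      refine ⟨insert i₀ H', ?_, ?_, ?_, ?_⟩
      · intro x hx
        rcases Finset.mem_insert.1 hx with rfl|hx
        · exact hi₀A
        · exact Finset.erase_subset _ _ (hH'sub hx)
      · have hi₀H' : i₀ ∉ H' := fun h => (Finset.mem_erase.1 (hH'sub h)).1 rfl
        rw [Finset.card_insert_of_notMem hi₀H']
        omega
      · -- the sums: A \ insert i₀ H' = (A.erase i₀) \ H'
        have hsets : A \ insert i₀ H' = (A.erase i₀) \ H' := by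
          ext x
          simp [Finset.mem_sdiff, Finset.mem_erase, Finset.mem_insert]
          tauto
        have hi₀H' : i₀ ∉ H' := fun h => (Finset.mem_erase.1 (hH'sub h)).1 rfl
        have hcard : (insert i₀ H').card = H'.card + 1 :=
          Finset.card_insert_of_notMem hi₀H'
        intro i hi
        rw [hsets, hcard]
        have hmc : (m + 1 - (H'.card + 1)) = m - H'.card := by omega
        rw [hmc]
        rcases Finset.mem_insert.1 hi with heq|hiH'
        · rw [heq]
          -- i = i₀ : need sum over (A.erase i₀) \ H' < (m - H'.card) * z i₀
          rcases Finset.eq_empty_or_nonempty H' with rfl|⟨i', hi'⟩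
          · -- H' empty
            simp only [Finset.sdiff_empty, Finset.card_empty, Nat.sub_zero]
            have hsum : (∑ j ∈ A, z j) = z i₀ + ∑ j ∈ A.erase i₀, z j :=
              (Finset.add_sum_erase A z hi₀A).symm
            push_cast at hviol ⊢
            linarith
          · have h1 : (∑ j ∈ (A.erase i₀) \ H', z j) < (m - H'.card : ℕ) * z i' := hin i' hi'
            have h2 : z i' ≤ z i₀ := hi₀max i' ((Finset.erase_subset _ _) (hH'sub hi'))
            have h3 : (0:ℝ) ≤ (m - H'.card : ℕ) := Nat.cast_nonneg _
            calc (∑ j ∈ (A.erase i₀) \ H', z j) < (m - H'.card : ℕ) * z i' := h1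
            _ ≤ (m - H'.card : ℕ) * z i₀ := by nlinarith
        · exact hin i hiH'
      · have hsets : A \ insert i₀ H' = (A.erase i₀) \ H' := by
          ext x
          simp [Finset.mem_sdiff, Finset.mem_erase, Finset.mem_insert]
          tauto
        have hi₀H' : i₀ ∉ H' := fun h => (Finset.mem_erase.1 (hH'sub h)).1 rfl
        have hcard : (insert i₀ H').card = H'.card + 1 :=
          Finset.card_insert_of_notMem hi₀H'
        intro i hi
        rw [hsets, hcard] at *
        have hmc : (m + 1 - (H'.card + 1)) = m - H'.card := by omega
        rw [hmc]
        exact hout i hi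

/-- cube slice: a `[0,1]`-valued vector supported on `A` with integer coordinate sum `m`
is in the convex hull of indicators of `m`-subsets of `A`. -/
lemma slice_mem_hull {d : ℕ} (A : Finset (Fin d)) (m : ℕ) :
    ∀ n (u : Fin d → ℝ), (A.filter (fun i => u i ≠ 0 ∧ u i ≠ 1)).card = n →
    (∀ i ∈ A, 0 ≤ u i ∧ u i ≤ 1) → (∀ i, i ∉ A → u i = 0) → (∑ i ∈ A, u i) = m →
    u ∈ convexHull ℝ {x : Fin d → ℝ |
      ∃ s : Finset (Fin d), s ⊆ A ∧ s.card = m ∧ x = fun i => if i ∈ s then (1:ℝ) else 0} := by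
  intro n
  induction n using Nat.strong_induction_on with
  | _ n ih =>
    intro u hcard hb h0 hsum
    rcases Finset.eq_empty_or_nonempty (A.filter (fun i => u i ≠ 0 ∧ u i ≠ 1)) with hE|hNE
    · -- base case: u is 0/1-valued on A
      have hint : ∀ i ∈ A, u i = 0 ∨ u i = 1 := by
        intro i hiA
        by_contra hcon
        push_neg at hcon
        have : i ∈ A.filter (fun i => u i ≠ 0 ∧ u i ≠ 1) :=
          Finset.mem_filter.2 ⟨hiA, hcon.1, hcon.2⟩
        simp [hE] at this
      set s := A.filter (fun i => u i = 1) with hs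
      have hsum2 : (∑ i ∈ A, u i) = s.card := by
        rw [← Finset.sum_filter_add_sum_filter_not A (fun i => u i = 1) u]
        have h1 : (∑ i ∈ A.filter (fun i => u i = 1), u i) = s.card := by
          rw [Finset.sum_congr rfl (fun i hi => (Finset.mem_filter.1 hi).2)]
          simp [hs]
        have h2 : (∑ i ∈ A.filter (fun i => ¬ u i = 1), u i) = 0 := by
          apply Finset.sum_eq_zero
          intro i hi
          obtain ⟨hiA, hne⟩ := Finset.mem_filter.1 hi
          rcases hint i hiA with h|h
          · exact h
          · exact absurd h hne
        rw [h1, h2, add_zero]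
      have hcardm : s.card = m := by
        have : (s.card : ℝ) = (m : ℝ) := by rw [← hsum2, hsum]
        exact_mod_cast this
      apply subset_convexHull
      refine ⟨s, Finset.filter_subset _ _, hcardm, ?_⟩
      funext i
      by_cases hi : i ∈ s
      · rw [if_pos hi]; exact (Finset.mem_filter.1 hi).2
      · rw [if_neg hi]
        by_cases hiA : i ∈ A
        · rcases hint i hiA with h|h
          · exact h
          · exact absurd (Finset.mem_filter.2 ⟨hiA, h⟩) hi
        · exact h0 i hiA
    · -- inductive step: two fractional coordinates
      obtain ⟨i, hi⟩ := hNE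
      obtain ⟨hiA, hi0, hi1⟩ := Finset.mem_filter.1 hi
      have hifrac : 0 < u i ∧ u i < 1 := by
        obtain ⟨h1, h2⟩ := hb i hiA
        exact ⟨h1.lt_of_ne (Ne.symm hi0), h2.lt_of_ne hi1⟩
      have hexj : ∃ j ∈ A.filter (fun i => u i ≠ 0 ∧ u i ≠ 1), j ≠ i := by
        by_contra hcon
        push_neg at hcon
        -- then the fractional set is {i}
        have ht : ∀ j ∈ A.erase i, u j = 0 ∨ u j = 1 := by
          intro j hj
          obtain ⟨hji, hjA⟩ := Finset.mem_erase.1 hj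
          by_contra hc
          push_neg at hc
          exact hji (hcon j (Finset.mem_filter.2 ⟨hjA, hc.1, hc.2⟩))
        set t := (A.erase i).filter (fun j => u j = 1) with hts
        have hsum3 : (∑ j ∈ A.erase i, u j) = t.card := by
          rw [← Finset.sum_filter_add_sum_filter_not (A.erase i) (fun j => u j = 1) u]
          have h1 : (∑ j ∈ (A.erase i).filter (fun j => u j = 1), u j) = t.card := by
            rw [Finset.sum_congr rfl (fun j hj => (Finset.mem_filter.1 hj).2)]
            simp [hts]
          have h2 : (∑ j ∈ (A.erase i).filter (fun j => ¬ u j = 1), u j) = 0 := by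
            apply Finset.sum_eq_zero
            intro j hj
            obtain ⟨hjE, hne⟩ := Finset.mem_filter.1 hj
            rcases ht j hjE with h|h
            · exact h
            · exact absurd h hne
          rw [h1, h2, add_zero]
        have hsplit : u i + (∑ j ∈ A.erase i, u j) = m := by
          rw [Finset.add_sum_erase A u hiA]; exact hsum
        rw [hsum3] at hsplit
        have hlt1 : (t.card : ℝ) < m := by linarith [hifrac.1]
        have hlt2 : (m : ℝ) < t.card + 1 := by linarith [hifrac.2]
        have : t.card < m := by exact_mod_cast hlt1
        have : m < t.card + 1 := by exact_mod_cast hlt2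
        omega
      obtain ⟨j, hjf, hji⟩ := hexj
      obtain ⟨hjA, hj0, hj1⟩ := Finset.mem_filter.1 hjf
      have hjfrac : 0 < u j ∧ u j < 1 := by
        obtain ⟨h1, h2⟩ := hb j hjA
        exact ⟨h1.lt_of_ne (Ne.symm hj0), h2.lt_of_ne hj1⟩
      set ε := min (1 - u i) (u j) with hε
      set δ := min (u i) (1 - u j) with hδ
      have hε0 : 0 < ε := lt_min (by linarith [hifrac.2]) hjfrac.1
      have hδ0 : 0 < δ := lt_min hifrac.1 (by linarith [hjfrac.2])
      set u1 := Function.update (Function.update u i (u i + ε)) j (u j - ε) with hu1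
      set u2 := Function.update (Function.update u i (u i - δ)) j (u j + δ) with hu2
      have hu1i : u1 i = u i + ε := by
        rw [hu1, Function.update_of_ne hji.symm, Function.update_self]
      have hu1j : u1 j = u j - ε := by rw [hu1, Function.update_self]
      have hu1x : ∀ x, x ≠ i → x ≠ j → u1 x = u x := by
        intro x hxi hxj
        rw [hu1, Function.update_of_ne hxj, Function.update_of_ne hxi]
      have hu2i : u2 i = u i - δ := by
        rw [hu2, Function.update_of_ne hji.symm, Function.update_self]
      have hu2j : u2 j = u j + δ := by rw [hu2, Function.update_self]
      have hu2x : ∀ x, x ≠ i → x ≠ j → u2 x = u x := by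
        intro x hxi hxj
        rw [hu2, Function.update_of_ne hxj, Function.update_of_ne hxi]
      have hεδ : 0 < ε + δ := by linarith
      have hcomb : u = (δ/(ε+δ)) • u1 + (ε/(ε+δ)) • u2 := by
        funext x
        simp only [Pi.add_apply, Pi.smul_apply, smul_eq_mul]
        by_cases hx : x = i
        · subst hx; rw [hu1i, hu2i]; field_simp; ring
        · by_cases hx' : x = j
          · subst hx'; rw [hu1j, hu2j]; field_simp; ring
          · rw [hu1x x hx hx', hu2x x hx hx']; field_simp; ring
      -- sums
      have hiA' : i ∈ A \ {j} := Finset.mem_sdiff.2 ⟨hiA, by simp [hji.symm]⟩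
      have hsum_aux : ∀ a b : ℝ,
          (∑ x ∈ A, Function.update (Function.update u i a) j b x)
            = b + (a + ∑ x ∈ (A \ {j}) \ {i}, u x) := by
        intro a b
        rw [Finset.sum_update_of_mem hjA]
        congr 1
        have : ∀ x ∈ A \ {j}, Function.update u i a x
            = Function.update u i a x := fun _ _ => rfl
        rw [Finset.sum_update_of_mem hiA']
      have hsumu : (∑ x ∈ A, u x) = u j + (u i + ∑ x ∈ (A \ {j}) \ {i}, u x) := by
        have h1 : (∑ x ∈ A, u x) = u j + ∑ x ∈ A \ {j}, u x := by
          rw [Finset.sdiff_singleton_eq_erase]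
          exact (Finset.add_sum_erase A u hjA).symm
        have h2 : (∑ x ∈ A \ {j}, u x) = u i + ∑ x ∈ (A \ {j}) \ {i}, u x := by
          rw [Finset.sdiff_singleton_eq_erase (a := i)]
          exact (Finset.add_sum_erase _ u hiA').symm
        rw [h1, h2]
      have hsum1 : (∑ x ∈ A, u1 x) = (m : ℝ) := by
        rw [hu1, hsum_aux]; rw [hsumu] at hsum; linarith
      have hsum2' : (∑ x ∈ A, u2 x) = (m : ℝ) := by
        rw [hu2, hsum_aux]; rw [hsumu] at hsum; linarith
      have hb1 : ∀ x ∈ A, 0 ≤ u1 x ∧ u1 x ≤ 1 := by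
        intro x hxA
        by_cases hx : x = i
        · rw [hx, hu1i]
          constructor
          · linarith [hifrac.1]
          · have : ε ≤ 1 - u i := min_le_left _ _
            linarith
        · by_cases hx' : x = j
          · rw [hx', hu1j]
            have : ε ≤ u j := min_le_right _ _
            constructor
            · linarith
            · linarith [hjfrac.2]
          · rw [hu1x x hx hx']; exact hb x hxA
      have hb2 : ∀ x ∈ A, 0 ≤ u2 x ∧ u2 x ≤ 1 := by
        intro x hxA
        by_cases hx : x = i
        · rw [hx, hu2i]
          have : δ ≤ u i := min_le_left _ _
          constructor
          · linarith
          · linarith [hifrac.2]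
        · by_cases hx' : x = j
          · rw [hx', hu2j]
            have : δ ≤ 1 - u j := min_le_right _ _
            constructor
            · linarith [hjfrac.1]
            · linarith
          · rw [hu2x x hx hx']; exact hb x hxA
      have h01 : ∀ x, x ∉ A → u1 x = 0 := by
        intro x hx
        have hxi : x ≠ i := fun h => hx (h ▸ hiA)
        have hxj : x ≠ j := fun h => hx (h ▸ hjA)
        rw [hu1x x hxi hxj]; exact h0 x hx
      have h02 : ∀ x, x ∉ A → u2 x = 0 := by
        intro x hx
        have hxi : x ≠ i := fun h => hx (h ▸ hiA)
        have hxj : x ≠ j := fun h => hx (h ▸ hjA)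
        rw [hu2x x hxi hxj]; exact h0 x hx
      have hn1 : 1 ≤ n := by
        rw [← hcard]
        exact Finset.card_pos.2 ⟨i, hi⟩
      have hfracsub : ∀ (v : Fin d → ℝ) (i₀ : Fin d), i₀ ∈ A.filter (fun x => u x ≠ 0 ∧ u x ≠ 1) →
          (v i₀ = 0 ∨ v i₀ = 1) → (∀ x, x ≠ i → x ≠ j → v x = u x) →
          (i₀ = i ∨ i₀ = j) →
          (A.filter (fun x => v x ≠ 0 ∧ v x ≠ 1)).card < n := by
        intro v i₀ hi₀f hv0 hvx hij
        have hsub : A.filter (fun x => v x ≠ 0 ∧ v x ≠ 1)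
            ⊆ (A.filter (fun x => u x ≠ 0 ∧ u x ≠ 1)).erase i₀ := by
          intro x hx
          obtain ⟨hxA, hx0, hx1⟩ := Finset.mem_filter.1 hx
          have hxi₀ : x ≠ i₀ := by
            rintro rfl
            rcases hv0 with h|h
            · exact hx0 h
            · exact hx1 h
          refine Finset.mem_erase.2 ⟨hxi₀, ?_⟩
          by_cases hxi : x = i
          · subst hxi; exact hi
          · by_cases hxj : x = j
            · subst hxj; exact hjf
            · rw [hvx x hxi hxj] at hx0 hx1
              exact Finset.mem_filter.2 ⟨hxA, hx0, hx1⟩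
        calc (A.filter (fun x => v x ≠ 0 ∧ v x ≠ 1)).card
            ≤ ((A.filter (fun x => u x ≠ 0 ∧ u x ≠ 1)).erase i₀).card :=
              Finset.card_le_card hsub
        _ = n - 1 := by rw [Finset.card_erase_of_mem hi₀f, hcard]
        _ < n := by omega
      have hcard1 : (A.filter (fun x => u1 x ≠ 0 ∧ u1 x ≠ 1)).card < n := by
        rcases min_cases (1 - u i) (u j) with ⟨he, _⟩|⟨he, _⟩
        · refine hfracsub u1 i hi (Or.inr ?_) hu1x (Or.inl rfl)
          rw [hu1i, hε, he]; ring
        · refine hfracsub u1 j hjf (Or.inl ?_) hu1x (Or.inr rfl)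
          rw [hu1j, hε, he]; ring
      have hcard2 : (A.filter (fun x => u2 x ≠ 0 ∧ u2 x ≠ 1)).card < n := by
        rcases min_cases (u i) (1 - u j) with ⟨he, _⟩|⟨he, _⟩
        · refine hfracsub u2 i hi (Or.inl ?_) hu2x (Or.inl rfl)
          rw [hu2i, hδ, he]; ring
        · refine hfracsub u2 j hjf (Or.inr ?_) hu2x (Or.inr rfl)
          rw [hu2j, hδ, he]; ring
      have mem1 := ih _ hcard1 u1 rfl hb1 h01 hsum1
      have mem2 := ih _ hcard2 u2 rfl hb2 h02 hsum2'
      rw [hcomb]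
      exact (convex_convexHull ℝ _) mem1 mem2 (by positivity) (by positivity)
        (by field_simp; ring)

lemma eucl_norm_sq {d : ℕ} (w : EuclideanSpace ℝ (Fin d)) :
    ‖w‖ ^ 2 = ∑ i, (w i) ^ 2 := by
  rw [EuclideanSpace.norm_eq]
  rw [Real.sq_sqrt (by positivity)]
  simp [sq_abs]

lemma elNet_smul (d k : ℕ) (c : ℝ) (hc : 0 ≤ c) (y : EuclideanSpace ℝ (Fin d)) :
    elNet d k (c • y) = c * elNet d k y := by
  unfold elNet
  have h1 : ‖c • y‖ = c * ‖y‖ := by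
    rw [norm_smul, Real.norm_of_nonneg hc]
  have h2 : (∑ i, |(c • y) i|) = c * ∑ i, |y i| := by
    rw [Finset.mul_sum]
    refine Finset.sum_congr rfl fun i _ => ?_
    have : (c • y) i = c * y i := rfl
    rw [this, abs_mul, abs_of_nonneg hc]
  rw [h1, h2, mul_div_assoc, mul_max_of_nonneg _ _ hc]

lemma elNet_le_one_on_ball (d k : ℕ) (hk1 : 1 ≤ k) (y : EuclideanSpace ℝ (Fin d))
    (hy : y ∈ kSupBall d k) : elNet d k y ≤ 1 := by
  have hC : Convex ℝ {x : EuclideanSpace ℝ (Fin d) | elNet d k x ≤ 1} := by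
    intro x hx y hy a b ha hb hab
    have key : elNet d k (a • x + b • y) ≤ a * elNet d k x + b * elNet d k y := by
      unfold elNet
      apply max_le
      · calc ‖a • x + b • y‖ ≤ ‖a • x‖ + ‖b • y‖ := norm_add_le _ _
        _ = a * ‖x‖ + b * ‖y‖ := by
            rw [norm_smul, norm_smul, Real.norm_of_nonneg ha, Real.norm_of_nonneg hb]
        _ ≤ a * max ‖x‖ ((∑ i, |x i|) / Real.sqrt k) + b * max ‖y‖ ((∑ i, |y i|) / Real.sqrt k) := by
            gcongr <;> exact le_max_left _ _
      · have hsum : (∑ i, |(a • x + b • y) i|) ≤ a * ∑ i, |x i| + b * ∑ i, |y i| := by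
          rw [Finset.mul_sum, Finset.mul_sum, ← Finset.sum_add_distrib]
          refine Finset.sum_le_sum fun i _ => ?_
          have : (a • x + b • y) i = a * x i + b * y i := rfl
          rw [this]
          calc |a * x i + b * y i| ≤ |a * x i| + |b * y i| := abs_add_le _ _
          _ = a * |x i| + b * |y i| := by
              rw [abs_mul, abs_mul, abs_of_nonneg ha, abs_of_nonneg hb]
        have hsk : (0:ℝ) < Real.sqrt k := Real.sqrt_pos.2 (by exact_mod_cast hk1)
        calc (∑ i, |(a • x + b • y) i|) / Real.sqrt k
            ≤ (a * ∑ i, |x i| + b * ∑ i, |y i|) / Real.sqrt k := by gcongr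
        _ = a * ((∑ i, |x i|) / Real.sqrt k) + b * ((∑ i, |y i|) / Real.sqrt k) := by ring
        _ ≤ a * max ‖x‖ ((∑ i, |x i|) / Real.sqrt k) + b * max ‖y‖ ((∑ i, |y i|) / Real.sqrt k) := by
            gcongr <;> exact le_max_right _ _
    calc elNet d k (a • x + b • y) ≤ a * elNet d k x + b * elNet d k y := key
    _ ≤ a * 1 + b * 1 := by gcongr; exacts [hx, hy]
    _ = 1 := by linarith
  have hSC : {w : EuclideanSpace ℝ (Fin d) | (Finset.univ.filter fun i => w i ≠ 0).card ≤ k ∧ ‖w‖ ≤ 1}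
      ⊆ {x | elNet d k x ≤ 1} := by
    rintro x ⟨hcard, hnorm⟩
    have hl1 : (∑ i, |x i|) ≤ Real.sqrt k := by
      set s := Finset.univ.filter fun i => x i ≠ 0 with hs
      have h1 : (∑ i, |x i|) = ∑ i ∈ s, |x i| := by
        rw [← Finset.sum_filter_add_sum_filter_not Finset.univ (fun i => x i ≠ 0) (fun i => |x i|)]
        have : (∑ i ∈ Finset.univ.filter (fun i => ¬ x i ≠ 0), |x i|) = 0 := by
          apply Finset.sum_eq_zero
          intro i hi
          have := (Finset.mem_filter.1 hi).2
          push_neg at this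
          simp [this]
        rw [this, add_zero]
      have h2 : (∑ i ∈ s, |x i|) ^ 2 ≤ s.card * ∑ i ∈ s, |x i| ^ 2 :=
        sq_sum_le_card_mul_sum_sq
      have h3 : (∑ i ∈ s, |x i| ^ 2) ≤ ∑ i, (x i) ^ 2 := by
        refine Finset.sum_le_sum_of_subset_of_nonneg (Finset.subset_univ s) ?_ |>.trans ?_
        · intro i _ _; positivity
        · refine le_of_eq (Finset.sum_congr rfl fun i _ => ?_); rw [sq_abs]
      have h4 : (∑ i, (x i) ^ 2) ≤ 1 := by
        rw [← eucl_norm_sq]; nlinarith [norm_nonneg x]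
      have h5 : (∑ i, |x i|) ^ 2 ≤ (k : ℝ) := by
        rw [h1]
        calc (∑ i ∈ s, |x i|) ^ 2 ≤ s.card * ∑ i ∈ s, |x i| ^ 2 := h2
        _ ≤ (k : ℝ) * 1 := by
            apply mul_le_mul ?_ (h3.trans h4) (by positivity) (by positivity)
            exact_mod_cast hcard
        _ = (k : ℝ) := mul_one _
      have h6 : (0:ℝ) ≤ ∑ i, |x i| := by positivity
      calc (∑ i, |x i|) = Real.sqrt ((∑ i, |x i|)^2) := (Real.sqrt_sq h6).symm
      _ ≤ Real.sqrt k := Real.sqrt_le_sqrt h5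
    show elNet d k x ≤ 1
    exact max_le hnorm (by
      rw [div_le_one (Real.sqrt_pos.2 (by exact_mod_cast hk1))]
      exact hl1)
  exact convexHull_min hSC hC hy

lemma elNet_le_kSupNorm (d k : ℕ) (hk1 : 1 ≤ k) (w : EuclideanSpace ℝ (Fin d)) :
    elNet d k w ≤ kSupNorm d k w := by
  by_cases hw : w = 0
  · subst hw
    rw [kSupNorm, gauge_zero]
    unfold elNet
    apply max_le
    · simp
    · simp
  · rw [kSupNorm, gauge_def]
    apply le_csInf
    · -- nonempty: r₀ = ∑ |w i|
      set r₀ : ℝ := ∑ i, |w i| with hr₀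
      have hr₀pos : 0 < r₀ := by
        have : ∃ i, w i ≠ 0 := by
          by_contra hc
          push_neg at hc
          apply hw
          ext i
          exact hc i
        obtain ⟨i, hi⟩ := this
        have h1 : 0 < |w i| := abs_pos.2 hi
        have h2 : |w i| ≤ ∑ j, |w j| :=
          Finset.single_le_sum (f := fun j => |w j|) (fun j _ => abs_nonneg _) (Finset.mem_univ i)
        linarith
      refine ⟨r₀, Set.mem_sep (Set.mem_Ioi.2 hr₀pos) ?_⟩
      rw [Set.mem_smul_set]
      refine ⟨r₀⁻¹ • w, ?_, by rw [smul_smul, mul_inv_cancel₀ (ne_of_gt hr₀pos), one_smul]⟩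
      -- r₀⁻¹ • w ∈ kSupBall
      have := (convex_convexHull ℝ
        {w : EuclideanSpace ℝ (Fin d) | (Finset.univ.filter fun i => w i ≠ 0).card ≤ k ∧ ‖w‖ ≤ 1}).sum_mem
        (t := Finset.univ) (w := fun i => |w i| / r₀)
        (z := fun i => Real.sign (w i) • (EuclideanSpace.single i (1:ℝ)))
        (fun i _ => by positivity)
        (by rw [← Finset.sum_div, ← hr₀, div_self (ne_of_gt hr₀pos)])
        (fun i _ => by
          apply subset_convexHull
          constructor
          · have hsub : (Finset.univ.filter fun j =>
                (Real.sign (w i) • (EuclideanSpace.single i (1:ℝ))) j ≠ 0) ⊆ {i} := by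
              intro j hj
              obtain ⟨_, hne⟩ := Finset.mem_filter.1 hj
              by_contra hji
              apply hne
              have hji' : j ≠ i := by simpa using hji
              have : (EuclideanSpace.single i (1:ℝ)) j = 0 := by
                rw [EuclideanSpace.single_apply, if_neg hji']
              show Real.sign (w i) * (EuclideanSpace.single i (1:ℝ)) j = 0
              rw [this, mul_zero]
            calc _ ≤ ({i} : Finset (Fin d)).card := Finset.card_le_card hsub
            _ = 1 := Finset.card_singleton i
            _ ≤ k := hk1
          · rw [norm_smul, EuclideanSpace.norm_single]
            rcases Real.sign_apply_eq (w i) with h|h|h <;> simp [h])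
      -- now identify the sum with r₀⁻¹ • w
      convert this using 1
      case e'_4 => rfl
      ext j
      show r₀⁻¹ * w j = _
      have : (∑ i, (|w i| / r₀) • (Real.sign (w i) • (EuclideanSpace.single i (1:ℝ)))) j
          = ∑ i, (|w i| / r₀) * (Real.sign (w i) * (if j = i then (1:ℝ) else 0)) := by
        rw [WithLp.ofLp_sum, Finset.sum_apply]
        refine Finset.sum_congr rfl fun i _ => ?_
        show (|w i| / r₀) * (Real.sign (w i) * (EuclideanSpace.single i (1:ℝ)) j) = _
        rw [EuclideanSpace.single_apply]
      rw [this, Finset.sum_eq_single j]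
      · simp only [if_pos rfl, mul_one, ↓reduceIte]
        have : Real.sign (w j) * |w j| = w j := by
          rcases lt_trichotomy (w j) 0 with h|h|h
          · rw [Real.sign_of_neg h, abs_of_neg h]; ring
          · simp [h]
          · rw [Real.sign_of_pos h, abs_of_pos h]; ring
        field_simp
        linarith [this]
      · intro i _ hij
        rw [if_neg (Ne.symm hij)]
        ring
      · intro h
        exact absurd (Finset.mem_univ j) h
    · -- lower bound
      rintro r ⟨hr, hmem⟩
      rw [Set.mem_Ioi] at hr
      rw [Set.mem_smul_set] at hmem
      obtain ⟨y, hy, hw'⟩ := hmem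
      rw [← hw', elNet_smul d k r hr.le y]
      have := elNet_le_one_on_ball d k hk1 y hy
      nlinarith

lemma numeric_tail (m k e T S : ℝ) (hm : 0 < m) (hk : 0 < k) (hmk : m ≤ k)
    (hT : 0 < T) (hTk : T * k < S * m) (hS : S ^ 2 ≤ k * e ^ 2) :
    T ^ 2 / m < e ^ 2 := by
  have hTk0 : 0 < T * k := mul_pos hT hk
  have h1 : (T * k) * (T * k) < (S * m) * (S * m) :=
    mul_lt_mul'' hTk hTk hTk0.le hTk0.le
  have h2 : T ^ 2 * k ^ 2 < (k * e ^ 2) * m ^ 2 := by nlinarith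
  have h3 : T ^ 2 * k < e ^ 2 * m ^ 2 := by
    have := (mul_lt_mul_iff_left₀ hk).1 (by nlinarith : (T ^ 2 * k) * k < (e ^ 2 * m ^ 2) * k)
    exact this
  have h4 : e ^ 2 * m ^ 2 ≤ e ^ 2 * m * k := by nlinarith [mul_le_mul_of_nonneg_left hmk (mul_nonneg (sq_nonneg e) hm.le)]
  have h6 : T ^ 2 < e ^ 2 * m := by
    have h5 : T ^ 2 * k < (e ^ 2 * m) * k := by nlinarith
    exact (mul_lt_mul_iff_left₀ hk).1 h5
  rw [div_lt_iff₀ hm]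
  linarith

lemma sign_mul_abs' (r : ℝ) : Real.sign r * |r| = r := by
  rcases lt_trichotomy r 0 with h|h|h
  · rw [Real.sign_of_neg h, abs_of_neg h]; ring
  · simp [h]
  · rw [Real.sign_of_pos h, abs_of_pos h]; ring

lemma sign_sq_le (r : ℝ) : Real.sign r ^ 2 ≤ 1 := by
  rcases Real.sign_apply_eq r with h|h|h <;> rw [h] <;> norm_num

set_option maxHeartbeats 1000000 in
lemma kSupNorm_lt_sqrt2_elNet (d k : ℕ) (hk1 : 1 ≤ k) (hkd : k ≤ d)
    (w : EuclideanSpace ℝ (Fin d)) (hw : w ≠ 0) :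
    kSupNorm d k w < Real.sqrt 2 * elNet d k w := by
  set z : Fin d → ℝ := fun i => |w i| with hzdef
  have hz : ∀ i, 0 ≤ z i := fun i => abs_nonneg _
  obtain ⟨H, _, hHcard, hin, hout⟩ := exists_head d z hz k hk1 Finset.univ
  set m : ℕ := k - H.card with hmdef
  have hm1 : 1 ≤ m := by omega
  set A : Finset (Fin d) := Finset.univ \ H with hAdef
  set T : ℝ := ∑ j ∈ A, z j with hTdef
  have hT0 : 0 ≤ T := Finset.sum_nonneg fun j _ => hz j
  set el : ℝ := elNet d k w with heldef
  have hnormpos : 0 < ‖w‖ := norm_pos_iff.2 hw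
  have helpos : 0 < el := lt_of_lt_of_le hnormpos (le_max_left _ _)
  have hl2 : ‖w‖ ≤ el := le_max_left _ _
  have hl1 : (∑ i, z i) / Real.sqrt k ≤ el := le_max_right _ _
  have hsqrtk : (0:ℝ) < Real.sqrt k := Real.sqrt_pos.2 (by exact_mod_cast hk1)
  have hl1' : (∑ i, z i) ≤ Real.sqrt k * el := by
    rw [div_le_iff₀ hsqrtk] at hl1; linarith
  have hsplit : (∑ i, z i) = (∑ i ∈ H, z i) + T := by
    rw [hTdef, hAdef, ← Finset.sum_filter_add_sum_filter_not Finset.univ (· ∈ H) z]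
    congr 1
    · exact Finset.sum_congr (by ext i; simp) fun _ _ => rfl
    · exact Finset.sum_congr (by ext i; simp) fun _ _ => rfl
  have sqrt2_one : (1:ℝ) < Real.sqrt 2 := by
    rw [show (1:ℝ) = Real.sqrt 1 by simp]
    exact Real.sqrt_lt_sqrt (by norm_num) (by norm_num)
  by_cases hT : T = 0
  · -- tail is zero : w is supported on H, card < k
    have hzA : ∀ i ∈ A, w i = 0 := by
      intro i hi
      have h1 : (m:ℝ) * z i ≤ T := hout i hi
      have h2 : (0:ℝ) < m := by exact_mod_cast hm1
      have : z i ≤ 0 := by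
        rw [hT] at h1; nlinarith [hz i]
      have : z i = 0 := le_antisymm this (hz i)
      exact abs_eq_zero.1 this
    have hmem : ‖w‖⁻¹ • w ∈ kSupBall d k := by
      apply subset_convexHull
      constructor
      · have hsub : (Finset.univ.filter fun i => (‖w‖⁻¹ • w) i ≠ 0) ⊆ H := by
          intro i hi
          have := (Finset.mem_filter.1 hi).2
          by_contra hiH
          have hiA : i ∈ A := by simp [hAdef, hiH]
          apply this
          show ‖w‖⁻¹ * w i = 0
          rw [hzA i hiA, mul_zero]
        calc _ ≤ H.card := Finset.card_le_card hsub
        _ ≤ k := by omega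
      · rw [norm_smul, Real.norm_of_nonneg (by positivity)]
        rw [inv_mul_cancel₀ (ne_of_gt hnormpos)]
    have hle : kSupNorm d k w ≤ ‖w‖ := by
      apply gauge_le_of_mem (norm_nonneg w)
      exact ⟨‖w‖⁻¹ • w, hmem, by
        show ‖w‖ • (‖w‖⁻¹ • w) = w
        rw [smul_smul, mul_inv_cancel₀ (ne_of_gt hnormpos), one_smul]⟩
    calc kSupNorm d k w ≤ ‖w‖ := hle
    _ ≤ el := hl2
    _ < Real.sqrt 2 * el := by nlinarith
  · have hTpos : 0 < T := lt_of_le_of_ne hT0 (Ne.symm hT)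
    set θ : ℝ := T / m with hθdef
    have hmR : (0:ℝ) < m := by exact_mod_cast hm1
    have hθpos : 0 < θ := div_pos hTpos hmR
    set u : Fin d → ℝ := fun i => if i ∈ H then 0 else z i / θ with hudef
    have hbounds : ∀ i ∈ A, 0 ≤ u i ∧ u i ≤ 1 := by
      intro i hi
      have hiH : i ∉ H := (Finset.mem_sdiff.1 hi).2
      rw [hudef]
      simp only [if_neg hiH]
      constructor
      · positivity
      · rw [div_le_one hθpos, hθdef, le_div_iff₀ hmR]
        have := hout i hi
        linarith
    have h0 : ∀ i, i ∉ A → u i = 0 := by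
      intro i hi
      have : i ∈ H := by
        by_contra hiH
        exact hi (by simp [hAdef, hiH])
      rw [hudef]; simp [this]
    have hsumu : (∑ i ∈ A, u i) = (m:ℝ) := by
      have : (∑ i ∈ A, u i) = (∑ i ∈ A, z i) / θ := by
        rw [Finset.sum_div]
        refine Finset.sum_congr rfl fun i hi => ?_
        rw [hudef]
        simp [(Finset.mem_sdiff.1 hi).2]
      rw [this, ← hTdef, hθdef]
      field_simp
    have humem := slice_mem_hull A m _ u rfl hbounds h0 hsumu
    rw [_root_.convexHull_eq] at humem
    obtain ⟨ι, t, lam, zf, hlam0, hlam1, hzf, hcm⟩ := humem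
    rw [Finset.centerMass_eq_of_sum_1 _ _ hlam1] at hcm
    -- the head-plus-tail vectors
    set A2 : ℝ := (∑ i ∈ H, z i ^ 2) + m * θ ^ 2 with hA2def
    have hA2pos : 0 < A2 := by
      have h1 : 0 ≤ ∑ i ∈ H, z i ^ 2 := Finset.sum_nonneg fun i _ => sq_nonneg _
      have h2 : 0 < (m:ℝ) * θ ^ 2 := mul_pos hmR (pow_pos hθpos 2)
      rw [hA2def]; linarith
    set R : ℝ := Real.sqrt A2 with hRdef
    have hRpos : 0 < R := Real.sqrt_pos.2 hA2pos
    set v : ι → EuclideanSpace ℝ (Fin d) := fun τ =>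
      (WithLp.toLp 2 fun i => (if i ∈ H then w i else 0) + θ * Real.sign (w i) * zf τ i :
        EuclideanSpace ℝ (Fin d)) with hvdef
    -- each v τ for τ ∈ t has small support and norm ≤ R
    have hvmem : ∀ τ ∈ t, R⁻¹ • v τ ∈
        {x : EuclideanSpace ℝ (Fin d) | (Finset.univ.filter fun i => x i ≠ 0).card ≤ k ∧ ‖x‖ ≤ 1} := by
      intro τ hτ
      obtain ⟨s, hsA, hscard, hzfs⟩ := hzf τ hτ
      have hvap : ∀ i, v τ i = (if i ∈ H then w i else 0)
          + θ * Real.sign (w i) * (if i ∈ s then (1:ℝ) else 0) := by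
        intro i
        rw [hvdef]
        show (if i ∈ H then w i else 0) + θ * Real.sign (w i) * zf τ i = _
        rw [hzfs]
      constructor
      · have hsub : (Finset.univ.filter fun i => (R⁻¹ • v τ) i ≠ 0) ⊆ H ∪ s := by
          intro i hi
          have hne := (Finset.mem_filter.1 hi).2
          by_contra hc
          rw [Finset.mem_union] at hc
          push_neg at hc
          apply hne
          show R⁻¹ * v τ i = 0
          rw [hvap i, if_neg hc.1, if_neg hc.2]
          ring
        calc _ ≤ (H ∪ s).card := Finset.card_le_card hsub
        _ ≤ H.card + s.card := Finset.card_union_le _ _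
        _ = H.card + m := by rw [hscard]
        _ = k := by omega
      · have hnv : ‖v τ‖ ≤ R := by
          have hsq : ‖v τ‖ ^ 2 ≤ A2 := by
            rw [eucl_norm_sq]
            have hsplitsum : (∑ i, (v τ i) ^ 2)
                = (∑ i ∈ H, (v τ i) ^ 2) + ∑ i ∈ A, (v τ i) ^ 2 := by
              rw [hAdef, ← Finset.sum_filter_add_sum_filter_not Finset.univ (· ∈ H) (fun i => (v τ i)^2)]
              congr 1
              · exact Finset.sum_congr (by ext i; simp) fun _ _ => rfl
              · exact Finset.sum_congr (by ext i; simp) fun _ _ => rfl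
            rw [hsplitsum]
            have hHterm : (∑ i ∈ H, (v τ i) ^ 2) = ∑ i ∈ H, z i ^ 2 := by
              refine Finset.sum_congr rfl fun i hi => ?_
              have his : i ∉ s := by
                intro hc
                have := hsA hc
                exact (Finset.mem_sdiff.1 this).2 hi
              rw [hvap i, if_pos hi, if_neg his]
              rw [hzdef]
              simp [sq_abs]
            have hAterm : (∑ i ∈ A, (v τ i) ^ 2) ≤ m * θ ^ 2 := by
              have : ∀ i ∈ A, (v τ i) ^ 2 ≤ θ ^ 2 * (if i ∈ s then (1:ℝ) else 0) := by
                intro i hi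
                have hiH : i ∉ H := (Finset.mem_sdiff.1 hi).2
                rw [hvap i, if_neg hiH, zero_add]
                by_cases his : i ∈ s
                · simp only [if_pos his, mul_one]
                  rw [mul_pow]
                  nlinarith [sign_sq_le (w i), sq_nonneg θ]
                · simp only [if_neg his, mul_zero]
                  simp
              calc (∑ i ∈ A, (v τ i) ^ 2) ≤ ∑ i ∈ A, θ ^ 2 * (if i ∈ s then (1:ℝ) else 0) :=
                  Finset.sum_le_sum this
              _ = θ ^ 2 * ∑ i ∈ A, (if i ∈ s then (1:ℝ) else 0) := by rw [Finset.mul_sum]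
              _ = θ ^ 2 * s.card := by
                  congr 1
                  rw [Finset.sum_ite_mem, Finset.inter_comm, (Finset.inter_eq_left).2 hsA]
                  simp
              _ = m * θ ^ 2 := by rw [hscard]; ring
            rw [hHterm]
            linarith
          calc ‖v τ‖ = Real.sqrt (‖v τ‖ ^ 2) := (Real.sqrt_sq (norm_nonneg _)).symm
          _ ≤ Real.sqrt A2 := Real.sqrt_le_sqrt hsq
          _ = R := rfl
        rw [norm_smul, Real.norm_of_nonneg (by positivity)]
        rw [inv_mul_le_iff₀ hRpos, mul_one]
        exact hnv
    -- w is the lam-weighted sum of the v's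
    have hwsum : w = ∑ τ ∈ t, lam τ • v τ := by
      ext i
      have happ : (∑ τ ∈ t, lam τ • v τ) i = ∑ τ ∈ t, lam τ * v τ i := by
        rw [WithLp.ofLp_sum, Finset.sum_apply]
        rfl
      have hzfi : (∑ τ ∈ t, lam τ * zf τ i) = u i := by
        have := congrFun hcm i
        rw [Finset.sum_apply] at this
        exact this
      have : (∑ τ ∈ t, lam τ * v τ i)
          = (if i ∈ H then w i else 0) + θ * Real.sign (w i) * u i := by
        have expand : ∀ τ ∈ t, lam τ * v τ i
            = lam τ * (if i ∈ H then w i else 0) + θ * Real.sign (w i) * (lam τ * zf τ i) := by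
          intro τ _
          have : v τ i = (if i ∈ H then w i else 0) + θ * Real.sign (w i) * zf τ i := rfl
          rw [this]; ring
        rw [Finset.sum_congr rfl expand, Finset.sum_add_distrib, ← Finset.sum_mul,
          ← Finset.mul_sum, hlam1, one_mul, hzfi]
      rw [happ, this]
      by_cases hiH : i ∈ H
      · rw [if_pos hiH, hudef]
        simp [hiH]
      · rw [if_neg hiH, hudef]
        simp only [if_neg hiH]
        rw [zero_add]
        have : θ * Real.sign (w i) * (z i / θ) = Real.sign (w i) * z i := by
          field_simp
        rw [this, hzdef, sign_mul_abs']
    -- hence R⁻¹ • w ∈ kSupBall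
    have hmemball : R⁻¹ • w ∈ kSupBall d k := by
      have : R⁻¹ • w = ∑ τ ∈ t, lam τ • (R⁻¹ • v τ) := by
        rw [hwsum, Finset.smul_sum]
        refine Finset.sum_congr rfl fun τ _ => ?_
        rw [smul_comm]
      rw [this]
      exact (convex_convexHull ℝ _).sum_mem hlam0 hlam1
        (fun τ hτ => subset_convexHull _ _ (hvmem τ hτ))
    have hgauge : kSupNorm d k w ≤ R := by
      apply gauge_le_of_mem hRpos.le
      exact ⟨R⁻¹ • w, hmemball, by
        show R • (R⁻¹ • w) = w
        rw [smul_smul, mul_inv_cancel₀ (ne_of_gt hRpos), one_smul]⟩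
    -- final numeric estimate : A2 < 2 * el^2
    have hA2lt : A2 < 2 * el ^ 2 := by
      have hH2 : (∑ i ∈ H, z i ^ 2) ≤ el ^ 2 := by
        have h1 : (∑ i ∈ H, z i ^ 2) ≤ ∑ i, z i ^ 2 :=
          Finset.sum_le_sum_of_subset_of_nonneg (Finset.subset_univ H)
            (fun i _ _ => sq_nonneg _)
        have h2 : (∑ i, z i ^ 2) = ‖w‖ ^ 2 := by
          rw [eucl_norm_sq]
          exact Finset.sum_congr rfl fun i _ => by rw [hzdef]; simp [sq_abs]
        nlinarith [norm_nonneg w]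
      have hl1sq : (∑ i, z i) ^ 2 ≤ k * el ^ 2 := by
        have hk0 : (0:ℝ) ≤ (k:ℝ) := Nat.cast_nonneg k
        have : Real.sqrt k * Real.sqrt k = (k:ℝ) := Real.mul_self_sqrt hk0
        nlinarith [Finset.sum_nonneg (fun i (_ : i ∈ Finset.univ) => hz i)]
      by_cases hH : H.card = 0
      · -- H empty: A2 = T^2/m with m = k and T = l1 norm
        have hHempty : H = ∅ := Finset.card_eq_zero.1 hH
        have hmk : m = k := by omega
        have hTl1 : T = ∑ i, z i := by
          rw [hTdef, hAdef, hHempty]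
          simp
        have : A2 = T ^ 2 / k := by
          rw [hA2def, hHempty, hθdef, hmk]
          have hkne : (k:ℝ) ≠ 0 := by positivity
          field_simp
          ring
        rw [this, hTl1]
        have h2 : (∑ i, z i) ^ 2 / k ≤ el ^ 2 := by
          rw [div_le_iff₀ (by positivity : (0:ℝ) < (k:ℝ))] at *
          nlinarith
        nlinarith
      · -- H nonempty : strict gain in the tail term
        have hHne : H.Nonempty := Finset.card_pos.1 (by omega)
        have hheadbig : (H.card : ℝ) * θ < ∑ i ∈ H, z i := by
          have : ∀ i ∈ H, θ < z i := by
            intro i hi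
            have := hin i hi
            rw [hθdef, div_lt_iff₀ hmR]
            calc T < (m:ℝ) * z i := this
            _ = z i * m := by ring
          calc (H.card : ℝ) * θ = ∑ _i ∈ H, θ := by rw [Finset.sum_const, nsmul_eq_mul]
          _ < ∑ i ∈ H, z i := Finset.sum_lt_sum_of_nonempty hHne this
        -- l1 > T * k / m
        have hcardk : (H.card : ℝ) + m = k := by
          have : H.card + m = k := by omega
          exact_mod_cast this
        have hl1big : T * k / m < ∑ i, z i := by
          rw [hsplit]
          have : T * k / m = (H.card : ℝ) * θ + T := by
            rw [hθdef]
            field_simp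
            nlinarith [hcardk]
          rw [this]
          linarith
        have hTbound : m * θ ^ 2 < el ^ 2 := by
          have hmθ : (m:ℝ) * θ ^ 2 = T ^ 2 / m := by
            rw [hθdef]; field_simp
          have hkpos : (0:ℝ) < k := by positivity
          have hmlek : (m:ℝ) ≤ k := by
            have : m ≤ k := by omega
            exact_mod_cast this
          have hTk : T * k < (∑ i, z i) * m := by
            rw [div_lt_iff₀ hmR] at hl1big
            linarith
          rw [hmθ]
          exact numeric_tail m k el T (∑ i, z i) hmR hkpos hmlek hTpos hTk hl1sq
        rw [hA2def]
        linarith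
    have hfinal : R < Real.sqrt 2 * el := by
      have : Real.sqrt 2 * el = Real.sqrt (2 * el ^ 2) := by
        rw [Real.sqrt_mul (by norm_num) , Real.sqrt_sq helpos.le]
      rw [this, hRdef]
      exact Real.sqrt_lt_sqrt hA2pos.le hA2lt
    linarith

/-- `‖w‖ₖᵉˡ ≤ ‖w‖ₖˢᵖ ≤ √2·‖w‖ₖᵉˡ`, with the second inequality
strict whenever `w ≠ 0`. -/
theorem statement3 (d k : ℕ) (hk1 : 1 ≤ k) (hkd : k ≤ d) (w : EuclideanSpace ℝ (Fin d)) :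
    elNet d k w ≤ kSupNorm d k w ∧
    kSupNorm d k w ≤ Real.sqrt 2 * elNet d k w ∧
    (w ≠ 0 → kSupNorm d k w < Real.sqrt 2 * elNet d k w) := by
  refine ⟨elNet_le_kSupNorm d k hk1 w, ?_, fun hw => kSupNorm_lt_sqrt2_elNet d k hk1 hkd w hw⟩
  by_cases hw : w = 0
  · subst hw
    rw [kSupNorm, gauge_zero]
    have h1 : 0 ≤ elNet d k 0 := le_trans (norm_nonneg (0 : EuclideanSpace ℝ (Fin d))) (le_max_left _ _)
    positivity
  · exact (kSupNorm_lt_sqrt2_elNet d k hk1 hkd w hw).le
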